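/- Let S be bisectorial with angle θ and radius r, D(S) ⊆ D(R). If there exist θ' ∈ (θ, π/2] and M' ≥ 0 such that ‖R(S − z)⁻¹‖ ≤ M'/|z|^(1−p) for all z ≠ 0 with θ' ≤ |arg z| ≤ π − θ', then R is p-subordinate to S. -/

import Mathlib

/-- `Rz` is a (bounded, everywhere defined) resolvent operator for `S` at `z`. -/
def HasRes {V : Type*} [NormedAddCommGroup V] [NormedSpace ℂ V]
    (S : V →ₗ.[ℂ] V) (z : ℂ) (Rz : V →L[ℂ] V) : Prop :=
  (∀ y : V, ∃ h : Rz y ∈ S.domain, S ⟨Rz y, h⟩ - z • Rz y = y) ∧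
  (∀ x : S.domain, Rz (S x - z • (x : V)) = (x : V))

/-- if `S` is bisectorial with angle `θ` and radius `r`, `D(S) ⊆ D(R)`,
and there are `θ' ∈ (θ, π/2]` and `M' ≥ 0` such that for all `z ≠ 0` with
`θ' ≤ |arg z| ≤ π − θ'` one has `‖R(S − z)⁻¹‖ ≤ M'/|z|^(1−p)`, then `R` is
`p`-subordinate to `S`. -/
theorem resolvent_estimate_psubordinate
    {V : Type*} [NormedAddCommGroup V] [NormedSpace ℂ V]
    (S R : V →ₗ.[ℂ] V) (hdom : S.domain ≤ R.domain)
    (θ : ℝ) (hθ0 : 0 ≤ θ) (hθ : θ < Real.pi / 2) (r : ℝ) (hr : 0 ≤ r)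
    (hbisect : ∀ θ'' : ℝ, θ < θ'' → θ'' ≤ Real.pi / 2 → ∃ M > (0 : ℝ), ∀ z : ℂ,
      θ'' ≤ |z.arg| → |z.arg| ≤ Real.pi - θ'' → r < ‖z‖ →
      ∃ Rz : V →L[ℂ] V, HasRes S z Rz ∧ ‖Rz‖ ≤ M / ‖z‖)
    (p : ℝ) (hp0 : 0 ≤ p) (hp1 : p ≤ 1)
    (θ' : ℝ) (hθ' : θ < θ') (hθ'2 : θ' ≤ Real.pi / 2)
    (M' : ℝ) (hM' : 0 ≤ M')
    (hest : ∀ z : ℂ, z ≠ 0 → θ' ≤ |z.arg| → |z.arg| ≤ Real.pi - θ' →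
      ∃ Rz : V →L[ℂ] V, HasRes S z Rz ∧
        ∀ y : V, ∀ hy : Rz y ∈ R.domain,
          ‖R ⟨Rz y, hy⟩‖ ≤ M' / ‖z‖ ^ (1 - p) * ‖y‖) :
    ∃ c ≥ (0 : ℝ), ∀ x : S.domain,
      ‖R ⟨(x : V), hdom x.2⟩‖ ≤ c * ‖(x : V)‖ ^ (1 - p) * ‖S x‖ ^ p := by
  have hθ'0 : 0 < θ' := lt_of_le_of_lt hθ0 hθ'
  refine ⟨2 * M', by positivity, fun x => ?_⟩
  have key : ∀ t : ℝ, 0 < t →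
      ‖R ⟨(x : V), hdom x.2⟩‖ ≤ M' / t ^ (1 - p) * (‖S x‖ + t * ‖(x : V)‖) := by
    intro t ht
    set z : ℂ := (t : ℂ) * Complex.exp (θ' * Complex.I) with hz
    have hargexp : Complex.arg (Complex.exp (θ' * Complex.I)) = θ' := by
      rw [show (θ' : ℂ) * Complex.I = (θ' : ℝ) * Complex.I from rfl,
        Complex.exp_mul_I, Complex.arg_cos_add_sin_mul_I]
      constructor
      · nlinarith [Real.pi_pos]
      · linarith [Real.pi_pos.le]
    have harg : z.arg = θ' := by
      rw [hz, show ((t : ℂ)) = ((t : ℝ) : ℂ) from rfl, Complex.arg_real_mul _ ht, hargexp]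
    have hzn : ‖z‖ = t := by
      rw [hz, norm_mul, Complex.norm_exp]
      simp [abs_of_pos ht]
    have hz0 : z ≠ 0 := by
      intro h
      rw [h, norm_zero] at hzn
      exact ht.ne hzn
    have hargabs : |z.arg| = θ' := by rw [harg, abs_of_pos hθ'0]
    obtain ⟨Rz, hRes, hb⟩ := hest z hz0 (le_of_eq hargabs.symm)
      (by rw [hargabs]; linarith)
    have hx : Rz (S x - z • (x : V)) = (x : V) := hRes.2 x
    have hy : Rz (S x - z • (x : V)) ∈ R.domain := by rw [hx]; exact hdom x.2
    have hbd := hb (S x - z • (x : V)) hy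
    have heq : R ⟨Rz (S x - z • (x : V)), hy⟩ = R ⟨(x : V), hdom x.2⟩ := by
      congr 1
      exact Subtype.ext hx
    rw [heq, hzn] at hbd
    refine hbd.trans ?_
    have h1 : ‖S x - z • (x : V)‖ ≤ ‖S x‖ + t * ‖(x : V)‖ := by
      refine (norm_sub_le _ _).trans ?_
      rw [norm_smul, hzn]
    have h2 : (0 : ℝ) ≤ M' / t ^ (1 - p) := by positivity
    exact mul_le_mul_of_nonneg_left h1 h2
  set a := ‖(x : V)‖ with haa
  set b := ‖S x‖ with hbb
  rcases eq_or_lt_of_le (norm_nonneg (x : V)) with ha | ha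
  · have hx0 : (x : V) = 0 := by rwa [eq_comm, norm_eq_zero] at ha
    have hR0 : R ⟨(x : V), hdom x.2⟩ = 0 := by
      have : (⟨(x : V), hdom x.2⟩ : R.domain) = 0 := Subtype.ext hx0
      rw [this, R.map_zero]
    rw [hR0, norm_zero]
    positivity
  · rcases eq_or_lt_of_le (norm_nonneg (S x)) with hb0 | hb0
    · have hb0' : b = 0 := hbb.trans hb0.symm
      rcases eq_or_lt_of_le hp0 with hp | hp
      · -- p = 0
        have hk := key 1 one_pos
        rw [hb0', ← hp] at hk ⊢
        simp only [sub_zero, Real.rpow_zero, Real.rpow_one, Real.one_rpow, mul_one,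
          zero_add, one_mul, div_one] at hk ⊢
        nlinarith
      · -- p > 0, b = 0 : show norm ≤ 0
        rw [hb0', Real.zero_rpow hp.ne', mul_zero]
        have hle : ∀ ε : ℝ, 0 < ε → ‖R ⟨(x : V), hdom x.2⟩‖ ≤ 0 + ε := by
          intro ε hε
          rw [zero_add]
          rcases eq_or_lt_of_le hM' with hM0 | hM0
          · have hk := key 1 one_pos
            rw [hb0', ← hM0] at hk
            simp at hk
            rw [hk, norm_zero]
            exact hε.le
          · set t : ℝ := (ε / (M' * a)) ^ (p⁻¹ : ℝ) with htd
            have htpos : 0 < t := Real.rpow_pos_of_pos (by positivity) _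
            have htp : t ^ p = ε / (M' * a) := by
              rw [htd, ← Real.rpow_mul (by positivity), inv_mul_cancel₀ hp.ne',
                Real.rpow_one]
            have hk := key t htpos
            rw [hb0', zero_add] at hk
            have hcalc : M' / t ^ (1 - p) * (t * a) = M' * t ^ p * a := by
              have ht1 : t ^ (1 - p) * t ^ p = t := by
                rw [← Real.rpow_add htpos]
                norm_num
              have hne : t ^ (1 - p) ≠ 0 := (Real.rpow_pos_of_pos htpos _).ne'
              field_simp
              linear_combination (-1 : ℝ) * a * ht1
            rw [hcalc, htp] at hk
            refine hk.trans (le_of_eq ?_)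
            have hMne : M' ≠ 0 := hM0.ne'
            have hane : a ≠ 0 := ha.ne'
            field_simp
        have := le_of_forall_pos_le_add hle
        simpa using this
    · -- a > 0, b > 0
      have hk := key (b / a) (by positivity)
      have hba : b / a * a = b := div_mul_cancel₀ b ha.ne'
      rw [hba] at hk
      refine hk.trans (le_of_eq ?_)
      have hdiv : (b / a) ^ (1 - p) = b ^ (1 - p) / a ^ (1 - p) :=
        Real.div_rpow hb0.le ha.le _
      have hbp : b ^ p * b ^ (1 - p) = b := by
        rw [← Real.rpow_add hb0]
        norm_num
        exact hbb.symm
      have hane : a ^ (1 - p) ≠ 0 := (Real.rpow_pos_of_pos ha _).ne'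
      have hbne : b ^ (1 - p) ≠ 0 := (Real.rpow_pos_of_pos hb0 _).ne'
      rw [hdiv]
      field_simp
      linear_combination (-2 : ℝ) * M' * hbp
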